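/- Let M(G) denote the minimum membership dimension over all good systems of categories for G. For any two connected graphs G and H, M(G × H) ≤ M(G) + M(H), where G × H is the Cartesian (box) product of graphs. -/

import Mathlib

open Finset SimpleGraph

variable {V : Type*}

def catDist [DecidableEq V] (S : Finset (Finset V)) (s t : V) : ℕ :=
  (S.filter fun C => t ∈ C ∧ s ∉ C).card

def IsGoodSystem [DecidableEq V] (G : SimpleGraph V) (S : Finset (Finset V)) : Prop :=
  (∀ C ∈ S, (G.induce (C : Set V)).Connected) ∧
    ∀ s t : V, s ≠ t → ∃ u, G.Adj s u ∧ catDist S u t < catDist S s t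

def memdim [DecidableEq V] [Fintype V] (S : Finset (Finset V)) : ℕ :=
  univ.sup fun v : V => (S.filter fun C => v ∈ C).card

noncomputable def graphDiam [Fintype V] (G : SimpleGraph V) : ℕ :=
  univ.sup fun p : V × V => G.dist p.1 p.2

noncomputable def minMemdim (V : Type*) [DecidableEq V] [Fintype V] (G : SimpleGraph V) : ℕ :=
  sInf {m | ∃ S : Finset (Finset V), IsGoodSystem G S ∧ memdim S = m}

section Anc

variable [DecidableEq V]

/-- ancestor set with fuel -/
def ancFuel (p : V → V) (r : V) : ℕ → V → Finset V
  | 0, x => {x}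
  | (n+1), x => if x = r then {x} else insert x (ancFuel p r n (p x))

variable {G : SimpleGraph V} {r : V} {p : V → V}
    (hp : ∀ v, v ≠ r → G.Adj v (p v) ∧ G.dist r (p v) + 1 = G.dist r v)

/-- ancestor set -/
noncomputable def anc (G : SimpleGraph V) (p : V → V) (r : V) (x : V) : Finset V :=
  ancFuel p r (G.dist r x) x

include hp

lemma ancFuel_stable : ∀ n x, G.dist r x ≤ n → ancFuel p r n x = anc G p r x := by
  intro n
  induction n with
  | zero =>
    intro x hx
    have : G.dist r x = 0 := Nat.le_zero.mp hx
    simp [anc, this]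
  | succ n ih =>
    intro x hx
    by_cases hxr : x = r
    · subst hxr
      simp [anc, ancFuel, SimpleGraph.dist_self]
    · have h2 := (hp x hxr).2
      have hle : G.dist r (p x) ≤ n := by omega
      have hd : G.dist r x = G.dist r (p x) + 1 := h2.symm
      rw [anc, hd]
      simp only [ancFuel, if_neg hxr]
      rw [ih (p x) hle]
      rfl

omit hp in
lemma anc_r : anc G p r r = {r} := by simp [anc, SimpleGraph.dist_self, ancFuel]

lemma anc_of_ne {x : V} (hx : x ≠ r) :
    anc G p r x = insert x (anc G p r (p x)) := by
  have h2 := (hp x hx).2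
  have : G.dist r x = G.dist r (p x) + 1 := h2.symm
  rw [anc, this]
  simp only [ancFuel, if_neg hx]
  rfl

omit hp in
lemma mem_anc_self (x : V) : x ∈ anc G p r x := by
  rw [anc]
  cases G.dist r x with
  | zero => simp [ancFuel]
  | succ n => simp only [ancFuel]; split <;> simp

lemma depth_lt_of_mem_anc : ∀ x y : V, y ∈ anc G p r x → y ≠ x → G.dist r y < G.dist r x := by
  suffices h : ∀ n x y, G.dist r x ≤ n → y ∈ anc G p r x → y ≠ x → G.dist r y < G.dist r x from
    fun x y => h (G.dist r x) x y le_rfl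
  intro n
  induction n with
  | zero =>
    intro x y hn hy hyx
    by_cases hxr : x = r
    · subst hxr; rw [anc_r] at hy; simp at hy; exact absurd hy hyx
    · have := (hp x hxr).2; omega
  | succ n ih =>
  intro x y hn hy hyx
  by_cases hxr : x = r
  · subst hxr; rw [anc_r] at hy; simp at hy; exact absurd hy hyx
  · rw [anc_of_ne hp hxr] at hy
    rcases Finset.mem_insert.mp hy with h | h
    · exact absurd h hyx
    · have hd : G.dist r (p x) + 1 = G.dist r x := (hp x hxr).2
      by_cases hypx : y = p x
      · subst hypx; omega
      · have := ih (p x) y (by omega) h hypx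
        omega

lemma r_mem_anc (x : V) : r ∈ anc G p r x := by
  suffices h : ∀ n x, G.dist r x ≤ n → r ∈ anc G p r x from h (G.dist r x) x le_rfl
  intro n
  induction n with
  | zero =>
    intro x hn
    by_cases hxr : x = r
    · subst hxr; rw [anc_r]; simp
    · have := (hp x hxr).2; omega
  | succ n ih =>
  intro x hn
  by_cases hxr : x = r
  · subst hxr; rw [anc_r]; simp
  · rw [anc_of_ne hp hxr]
    have hd : G.dist r (p x) + 1 = G.dist r x := (hp x hxr).2
    exact Finset.mem_insert_of_mem (ih (p x) (by omega))

lemma anc_subset_of_mem : ∀ x y : V, y ∈ anc G p r x → anc G p r y ⊆ anc G p r x := by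
  suffices h : ∀ n x y, G.dist r x ≤ n → y ∈ anc G p r x → anc G p r y ⊆ anc G p r x from
    fun x y => h (G.dist r x) x y le_rfl
  intro n
  induction n with
  | zero =>
    intro x y hn hy
    by_cases hxr : x = r
    · subst hxr; rw [anc_r] at hy ⊢; simp at hy; subst hy; rw [anc_r]
    · have := (hp x hxr).2; omega
  | succ n ih =>
  intro x y hn hy
  by_cases hxr : x = r
  · subst hxr; rw [anc_r] at hy ⊢; simp at hy; subst hy; rw [anc_r]
  · rw [anc_of_ne hp hxr] at hy ⊢
    rcases Finset.mem_insert.mp hy with h | h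
    · subst h; rw [anc_of_ne hp hxr]
    · have hd : G.dist r (p x) + 1 = G.dist r x := (hp x hxr).2
      exact (ih (p x) y (by omega) h).trans (Finset.subset_insert _ _)

lemma not_mem_anc_of_mem {s t : V} (h : s ∈ anc G p r t) (hst : s ≠ t) :
    t ∉ anc G p r s := by
  intro ht
  have h1 := depth_lt_of_mem_anc hp t s h hst
  have h2 := depth_lt_of_mem_anc hp s t ht (Ne.symm hst)
  omega

lemma exists_child : ∀ t s : V, s ∈ anc G p r t → s ≠ t →
    ∃ c, c ∈ anc G p r t ∧ c ≠ r ∧ p c = s := by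
  suffices h : ∀ n t s, G.dist r t ≤ n → s ∈ anc G p r t → s ≠ t →
      ∃ c, c ∈ anc G p r t ∧ c ≠ r ∧ p c = s from
    fun t s => h (G.dist r t) t s le_rfl
  intro n
  induction n with
  | zero =>
    intro t s hn hs hst
    by_cases htr : t = r
    · subst htr; rw [anc_r] at hs; simp at hs; exact absurd hs hst
    · have := (hp t htr).2; omega
  | succ n ih =>
  intro t s hn hs hst
  by_cases htr : t = r
  · subst htr; rw [anc_r] at hs; simp at hs; exact absurd hs hst
  · rw [anc_of_ne hp htr] at hs
    have hd : G.dist r (p t) + 1 = G.dist r t := (hp t htr).2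
    rcases Finset.mem_insert.mp hs with h | h
    · exact absurd h hst
    · by_cases hspt : s = p t
      · refine ⟨t, mem_anc_self t, htr, hspt ▸ rfl⟩
      · obtain ⟨c, hc1, hc2, hc3⟩ := ih (p t) s (by omega) h hspt
        refine ⟨c, ?_, hc2, hc3⟩
        rw [anc_of_ne hp htr]
        exact Finset.mem_insert_of_mem hc1

section Sys

variable [Fintype V]

/-- descendant category -/
noncomputable def Dv (G : SimpleGraph V) (p : V → V) (r : V) (v : V) : Finset V :=
  univ.filter (fun x => v ∈ anc G p r x)

/-- complement category -/
noncomputable def Uv (G : SimpleGraph V) (p : V → V) (r : V) (v : V) : Finset V :=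
  univ.filter (fun x => v ∉ anc G p r x)

/-- the tree system -/
noncomputable def treeSys (G : SimpleGraph V) (p : V → V) (r : V) : Finset (Finset V) :=
  (univ.image (Dv G p r)) ∪ ((univ.filter (· ≠ r)).image (Uv G p r))

omit hp in
lemma mem_Dv {v x : V} : x ∈ Dv G p r v ↔ v ∈ anc G p r x := by simp [Dv]

omit hp in
lemma mem_Uv {v x : V} : x ∈ Uv G p r v ↔ v ∉ anc G p r x := by simp [Uv]

lemma Dv_injective : Function.Injective (Dv G p r) := by
  intro v w h
  have hv : v ∈ Dv G p r w := h ▸ mem_Dv.mpr (mem_anc_self v)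
  have hw : w ∈ Dv G p r v := h.symm ▸ mem_Dv.mpr (mem_anc_self w)
  rw [mem_Dv] at hv hw
  by_contra hne
  have := depth_lt_of_mem_anc hp v w hv (Ne.symm hne)
  have := depth_lt_of_mem_anc hp w v hw hne
  omega

lemma Uv_injective : Function.Injective (Uv G p r) := by
  intro v w h
  apply Dv_injective hp
  ext x
  have : x ∈ Uv G p r v ↔ x ∈ Uv G p r w := by rw [h]
  simp only [mem_Dv, mem_Uv] at *
  tauto

omit hp in
lemma r_mem_Dv_iff {v : V} : r ∈ Dv G p r v ↔ v = r := by
  rw [mem_Dv, anc_r]; simp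

omit hp in
lemma r_mem_Uv_iff {v : V} : r ∈ Uv G p r v ↔ v ≠ r := by
  rw [mem_Uv, anc_r]; simp

/-- catDist for the tree system -/
lemma treeSys_catDist (s t : V) :
    catDist (treeSys G p r) s t =
      (anc G p r t \ anc G p r s).card + (anc G p r s \ anc G p r t).card := by
  classical
  rw [catDist, treeSys, Finset.filter_union]
  rw [Finset.card_union_of_disjoint]
  · congr 1
    · rw [Finset.filter_image]
      rw [Finset.card_image_of_injective _ (Dv_injective hp)]
      congr 1
      ext v
      simp only [Finset.mem_filter, Finset.mem_univ, true_and, Function.comp,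
        Finset.mem_sdiff, mem_Dv]
    · rw [Finset.filter_image]
      rw [Finset.card_image_of_injective _ (Uv_injective hp)]
      congr 1
      ext v
      simp only [Finset.mem_filter, Finset.mem_univ, true_and, Function.comp,
        Finset.mem_sdiff, mem_Uv, not_not]
      constructor
      · rintro ⟨-, ht, hs⟩; exact ⟨hs, ht⟩
      · rintro ⟨hs, ht⟩
        have hvr : v ≠ r := by rintro rfl; exact ht (r_mem_anc hp t)
        exact ⟨hvr, ht, hs⟩
  · rw [Finset.disjoint_left]
    rintro C hC1 hC2
    rw [Finset.filter_image, Finset.mem_image] at hC1 hC2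
    obtain ⟨v, hv, rfl⟩ := hC1
    obtain ⟨w, hw, hDU⟩ := hC2
    simp only [Finset.mem_filter, Finset.mem_univ, true_and, Function.comp, mem_Dv, mem_Uv,
      not_not] at hv hw
    -- r ∈ Uv w but r ∉ Dv v
    have hwr : w ≠ r := by rintro rfl; exact hw.2.1 (r_mem_anc hp t)
    have hr1 : r ∈ Uv G p r w := r_mem_Uv_iff.mpr hwr
    rw [hDU, r_mem_Dv_iff] at hr1
    subst hr1
    exact hv.2 (r_mem_anc hp s)

lemma Dv_connected (v : V) : (G.induce ((Dv G p r v : Finset V) : Set V)).Connected := by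
  have hv : v ∈ ((Dv G p r v : Finset V) : Set V) := by
    exact Finset.mem_coe.mpr (mem_Dv.mpr (mem_anc_self v))
  rw [connected_iff]
  refine ⟨fun a b => ?_, ⟨⟨v, hv⟩⟩⟩
  suffices h : ∀ (n : ℕ) (x : V) (hx : x ∈ ((Dv G p r v : Finset V) : Set V)), G.dist r x ≤ n →
      (G.induce ((Dv G p r v : Finset V) : Set V)).Reachable ⟨x, hx⟩ ⟨v, hv⟩ by
    exact ((h _ a.1 a.2 le_rfl).trans (h _ b.1 b.2 le_rfl).symm)
  intro n
  induction n with
  | zero =>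
    intro x hx hn
    by_cases hxv : x = v
    · subst hxv; exact Reachable.refl _
    · have hxD : v ∈ anc G p r x := Finset.mem_coe.mp hx |> mem_Dv.mp
      by_cases hxr : x = r
      · subst hxr; rw [anc_r] at hxD; simp at hxD; exact absurd hxD.symm hxv
      · have := (hp x hxr).2; omega
  | succ n ih =>
    intro x hx hn
    by_cases hxv : x = v
    · subst hxv; exact Reachable.refl _
    · have hxD : v ∈ anc G p r x := Finset.mem_coe.mp hx |> mem_Dv.mp
      by_cases hxr : x = r
      · subst hxr; rw [anc_r] at hxD; simp at hxD; exact absurd hxD.symm hxv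
      · have hpx := hp x hxr
        have hpxD : (p x) ∈ ((Dv G p r v : Finset V) : Set V) := by
          refine Finset.mem_coe.mpr (mem_Dv.mpr ?_)
          have := anc_of_ne hp hxr
          rw [this] at hxD
          rcases Finset.mem_insert.mp hxD with h | h
          · exact absurd h.symm hxv
          · exact h
        have hadj : (G.induce ((Dv G p r v : Finset V) : Set V)).Adj ⟨x, hx⟩ ⟨p x, hpxD⟩ :=
          hpx.1
        exact hadj.reachable.trans (ih (p x) hpxD (by omega))

lemma Uv_connected {v : V} (hvr : v ≠ r) :
    (G.induce ((Uv G p r v : Finset V) : Set V)).Connected := by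
  have hrU : r ∈ ((Uv G p r v : Finset V) : Set V) := by
    refine Finset.mem_coe.mpr (mem_Uv.mpr ?_)
    rw [anc_r]; simpa using hvr
  rw [connected_iff]
  refine ⟨fun a b => ?_, ⟨⟨r, hrU⟩⟩⟩
  suffices h : ∀ (n : ℕ) (x : V) (hx : x ∈ ((Uv G p r v : Finset V) : Set V)), G.dist r x ≤ n →
      (G.induce ((Uv G p r v : Finset V) : Set V)).Reachable ⟨x, hx⟩ ⟨r, hrU⟩ by
    exact ((h _ a.1 a.2 le_rfl).trans (h _ b.1 b.2 le_rfl).symm)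
  intro n
  induction n with
  | zero =>
    intro x hx hn
    by_cases hxr : x = r
    · subst hxr; exact Reachable.refl _
    · have := (hp x hxr).2; omega
  | succ n ih =>
    intro x hx hn
    by_cases hxr : x = r
    · subst hxr; exact Reachable.refl _
    · have hpx := hp x hxr
      have hxU : v ∉ anc G p r x := Finset.mem_coe.mp hx |> mem_Uv.mp
      have hpxU : (p x) ∈ ((Uv G p r v : Finset V) : Set V) := by
        refine Finset.mem_coe.mpr (mem_Uv.mpr ?_)
        intro hc
        exact hxU ((anc_of_ne hp hxr) ▸ Finset.mem_insert_of_mem hc)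
      have hadj : (G.induce ((Uv G p r v : Finset V) : Set V)).Adj ⟨x, hx⟩ ⟨p x, hpxU⟩ :=
        hpx.1
      exact hadj.reachable.trans (ih (p x) hpxU (by omega))

theorem treeSys_good : IsGoodSystem G (treeSys G p r) := by
  constructor
  · intro C hC
    rw [treeSys, Finset.mem_union] at hC
    rcases hC with h | h
    · obtain ⟨v, -, rfl⟩ := Finset.mem_image.mp h
      exact Dv_connected hp v
    · obtain ⟨v, hv, rfl⟩ := Finset.mem_image.mp h
      exact Uv_connected hp (by simpa using (Finset.mem_filter.mp hv).2)
  · intro s t hst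
    by_cases hmem : s ∈ anc G p r t
    · -- go down: to the child of s towards t
      obtain ⟨c, hc1, hc2, hc3⟩ := exists_child hp t s hmem hst
      refine ⟨c, ?_, ?_⟩
      · have := (hp c hc2).1
        rw [hc3] at this
        exact this.symm
      · rw [treeSys_catDist hp, treeSys_catDist hp]
        have hancc : anc G p r c = insert c (anc G p r s) := by
          rw [anc_of_ne hp hc2, hc3]
        have hsub_s : anc G p r s ⊆ anc G p r t := anc_subset_of_mem hp t s hmem
        have hsub_c : anc G p r c ⊆ anc G p r t := anc_subset_of_mem hp t c hc1
        have hcs : c ∉ anc G p r s := by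
          intro hcons
          have hdc : G.dist r (p c) + 1 = G.dist r c := (hp c hc2).2
          rw [hc3] at hdc
          have hcnes : c ≠ s := by intro h; rw [h] at hdc; omega
          have := depth_lt_of_mem_anc hp s c hcons hcnes
          omega
        have hts : t ∉ anc G p r s := not_mem_anc_of_mem hp hmem hst
        have h1 : anc G p r c \ anc G p r t = ∅ :=
          Finset.sdiff_eq_empty_iff_subset.mpr hsub_c
        have h2 : anc G p r s \ anc G p r t = ∅ :=
          Finset.sdiff_eq_empty_iff_subset.mpr hsub_s
        have h3 : anc G p r t \ anc G p r c = (anc G p r t \ anc G p r s).erase c := by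
          rw [hancc]
          ext y
          simp only [Finset.mem_sdiff, Finset.mem_insert, Finset.mem_erase]
          tauto
        have hcmem : c ∈ anc G p r t \ anc G p r s := Finset.mem_sdiff.mpr ⟨hc1, hcs⟩
        rw [h1, h2, h3, Finset.card_erase_of_mem hcmem]
        have : 0 < (anc G p r t \ anc G p r s).card := Finset.card_pos.mpr ⟨c, hcmem⟩
        simp only [Finset.card_empty]
        omega
    · -- go up: to the parent of s
      have hsr : s ≠ r := by rintro rfl; exact hmem (r_mem_anc hp t)
      refine ⟨p s, (hp s hsr).1, ?_⟩
      rw [treeSys_catDist hp, treeSys_catDist hp]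
      have hancs : anc G p r s = insert s (anc G p r (p s)) := anc_of_ne hp hsr
      have hsps : s ∉ anc G p r (p s) := by
        intro hcons
        have hds : G.dist r (p s) + 1 = G.dist r s := (hp s hsr).2
        have hnes : s ≠ p s := by intro h; rw [← h] at hds; omega
        have := depth_lt_of_mem_anc hp (p s) s hcons hnes
        omega
      have h1 : anc G p r t \ anc G p r (p s) = anc G p r t \ anc G p r s := by
        rw [hancs, Finset.sdiff_insert_of_notMem hmem]
      have h2 : anc G p r s \ anc G p r t = insert s (anc G p r (p s) \ anc G p r t) := by
        rw [hancs, Finset.insert_sdiff_of_notMem _ hmem]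
      have hnotmem : s ∉ anc G p r (p s) \ anc G p r t := fun hc =>
        hsps (Finset.mem_sdiff.mp hc).1
      rw [h1, h2, Finset.card_insert_of_notMem hnotmem]
      omega

end Sys

end Anc

theorem exists_goodSystem [Fintype V] [DecidableEq V] {G : SimpleGraph V} (hG : G.Connected) :
    ∃ S : Finset (Finset V), IsGoodSystem G S := by
  obtain ⟨r⟩ := hG.nonempty
  have hpar : ∀ v : V, v ≠ r → ∃ u, G.Adj v u ∧ G.dist r u + 1 = G.dist r v := by
    intro v hv
    have hd : G.dist r v ≠ 0 := (hG.pos_dist_of_ne (fun h => hv h.symm)).ne'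
    obtain ⟨w, hw⟩ := SimpleGraph.exists_walk_of_dist_ne_zero hd
    have hw' : w.reverse.length = G.dist r v := by rw [SimpleGraph.Walk.length_reverse, hw]
    cases hwr : w.reverse with
    | nil =>
      rw [hwr] at hw'
      simp at hw'
      simp at hd
    | cons h q =>
      rename_i u
      refine ⟨u, h, ?_⟩
      have hlq : G.dist r u ≤ q.length := by
        have := SimpleGraph.dist_le q.reverse
        rwa [SimpleGraph.Walk.length_reverse] at this
      have hlen : q.length + 1 = G.dist r v := by
        rw [hwr] at hw'
        simpa using hw'
      have htri : G.dist r v ≤ G.dist r u + 1 := by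
        have h1 : G.dist u v = 1 := by
          rw [SimpleGraph.dist_eq_one_iff_adj]; exact h.symm
        have := hG.dist_triangle (v := u) (u := r) (w := v)
        omega
      omega
  classical
  set p : V → V := fun v => if h : v = r then r else Classical.choose (hpar v h) with hpdef
  have hp : ∀ v, v ≠ r → G.Adj v (p v) ∧ G.dist r (p v) + 1 = G.dist r v := by
    intro v hv
    have : p v = Classical.choose (hpar v hv) := by rw [hpdef]; simp [hv]
    rw [this]
    exact Classical.choose_spec (hpar v hv)
  exact ⟨treeSys G p r, treeSys_good hp⟩

section Product

variable {W : Type*} [Fintype V] [DecidableEq V] [Fintype W] [DecidableEq W]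

/-- product system -/
def prodSys (SG : Finset (Finset V)) (ST : Finset (Finset W)) : Finset (Finset (V × W)) :=
  (SG.image (fun C => C ×ˢ (univ : Finset W))) ∪
    (ST.image (fun D => (univ : Finset V) ×ˢ D))

lemma left_inj [Nonempty W] :
    Function.Injective (fun C : Finset V => C ×ˢ (univ : Finset W)) := by
  intro C C' h
  ext a
  have w0 : W := Classical.arbitrary W
  have := Finset.ext_iff.mp h (a, w0)
  simpa [Finset.mem_product] using this

lemma right_inj [Nonempty V] :
    Function.Injective (fun D : Finset W => (univ : Finset V) ×ˢ D) := by
  intro D D' h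
  ext b
  have v0 : V := Classical.arbitrary V
  have := Finset.ext_iff.mp h (v0, b)
  simpa [Finset.mem_product] using this

lemma prodSys_catDist [Nonempty V] [Nonempty W] (SG : Finset (Finset V))
    (ST : Finset (Finset W)) (s t : V × W) :
    catDist (prodSys SG ST) s t = catDist SG s.1 t.1 + catDist ST s.2 t.2 := by
  classical
  rw [catDist, prodSys, Finset.filter_union, Finset.card_union_of_disjoint]
  · congr 1
    · rw [Finset.filter_image, Finset.card_image_of_injective _ left_inj, catDist]
      congr 1
      apply Finset.filter_congr
      intro C _
      simp [Finset.mem_product]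
    · rw [Finset.filter_image, Finset.card_image_of_injective _ right_inj, catDist]
      congr 1
      apply Finset.filter_congr
      intro D _
      simp [Finset.mem_product]
  · rw [Finset.disjoint_left]
    rintro X hX1 hX2
    rw [Finset.mem_filter, Finset.mem_image] at hX1 hX2
    obtain ⟨⟨C, hC, rfl⟩, ht1, hs1⟩ := hX1
    obtain ⟨⟨D, hD, hDX⟩, ht2, hs2⟩ := hX2
    rw [← hDX] at ht2 hs2
    rw [Finset.mem_product] at ht1 ht2
    have hs1' : s.1 ∉ C := by
      intro hc
      exact hs1 (Finset.mem_product.mpr ⟨hc, Finset.mem_univ _⟩)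
    have hs2' : s.2 ∉ D := by
      intro hc
      exact hs2 (Finset.mem_product.mpr ⟨Finset.mem_univ _, hc⟩)
    -- (s.1, t.2) is in univ ×ˢ D = C ×ˢ univ, contradiction
    have hmem : (s.1, t.2) ∈ (univ : Finset V) ×ˢ D :=
      Finset.mem_product.mpr ⟨Finset.mem_univ _, ht2.2⟩
    rw [hDX] at hmem
    rw [Finset.mem_product] at hmem
    exact hs1' hmem.1

lemma prodSys_memdim (SG : Finset (Finset V)) (ST : Finset (Finset W)) :
    memdim (prodSys SG ST) ≤ memdim SG + memdim ST := by
  classical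
  rw [memdim]
  apply Finset.sup_le
  intro x _
  rw [prodSys, Finset.filter_union]
  refine (Finset.card_union_le _ _).trans ?_
  gcongr
  · rw [Finset.filter_image]
    refine (Finset.card_image_le).trans ?_
    have : (SG.filter fun C => x ∈ C ×ˢ (univ : Finset W)) =
        SG.filter fun C => x.1 ∈ C := by
      apply Finset.filter_congr
      intro C _
      simp [Finset.mem_product]
    rw [this]
    exact Finset.le_sup (f := fun v : V => (SG.filter fun C => v ∈ C).card) (Finset.mem_univ x.1)
  · rw [Finset.filter_image]
    refine (Finset.card_image_le).trans ?_
    have : (ST.filter fun D => x ∈ (univ : Finset V) ×ˢ D) =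
        ST.filter fun D => x.2 ∈ D := by
      apply Finset.filter_congr
      intro D _
      simp [Finset.mem_product]
    rw [this]
    exact Finset.le_sup (f := fun w : W => (ST.filter fun C => w ∈ C).card) (Finset.mem_univ x.2)

lemma left_cat_connected {G : SimpleGraph V} {H : SimpleGraph W} (hH : H.Connected)
    {C : Finset V} (hC : (G.induce (C : Set V)).Connected) :
    ((G □ H).induce ((C ×ˢ (univ : Finset W) : Finset (V × W)) : Set (V × W))).Connected := by
  have hmem : ∀ (a : V) (b : W), a ∈ C →
      (a, b) ∈ ((C ×ˢ (univ : Finset W) : Finset (V × W)) : Set (V × W)) := by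
    intro a b ha
    exact Finset.mem_coe.mpr (Finset.mem_product.mpr ⟨ha, Finset.mem_univ _⟩)
  obtain ⟨⟨c0, hc0⟩⟩ := hC.nonempty
  obtain ⟨w0⟩ := hH.nonempty
  rw [connected_iff]
  refine ⟨?_, ⟨⟨(c0, w0), hmem c0 w0 hc0⟩⟩⟩
  rintro ⟨⟨a, b⟩, hab⟩ ⟨⟨c, d⟩, hcd⟩
  have haC : a ∈ C := (Finset.mem_product.mp (Finset.mem_coe.mp hab)).1
  have hcC : c ∈ C := (Finset.mem_product.mp (Finset.mem_coe.mp hcd)).1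
  let X : Set (V × W) := ((C ×ˢ (univ : Finset W) : Finset (V × W)) : Set (V × W))
  let φ : (G.induce (C : Set V)) →g ((G □ H).induce X) :=
    ⟨fun x => ⟨(x.1, b), hmem x.1 b x.2⟩, by
      intro x y h
      exact SimpleGraph.boxProd_adj_left.mpr h⟩
  let ψ : H →g ((G □ H).induce X) :=
    ⟨fun w => ⟨(c, w), hmem c w hcC⟩, by
      intro x y h
      exact SimpleGraph.boxProd_adj_right.mpr h⟩
  have r1 : ((G □ H).induce X).Reachable ⟨(a, b), hab⟩ ⟨(c, b), hmem c b hcC⟩ :=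
    (hC.preconnected ⟨a, haC⟩ ⟨c, hcC⟩).map φ
  have r2 : ((G □ H).induce X).Reachable ⟨(c, b), hmem c b hcC⟩ ⟨(c, d), hcd⟩ :=
    (hH.preconnected b d).map ψ
  exact r1.trans r2

lemma right_cat_connected {G : SimpleGraph V} {H : SimpleGraph W} (hG : G.Connected)
    {D : Finset W} (hD : (H.induce (D : Set W)).Connected) :
    ((G □ H).induce (((univ : Finset V) ×ˢ D : Finset (V × W)) : Set (V × W))).Connected := by
  have hmem : ∀ (a : V) (b : W), b ∈ D →
      (a, b) ∈ (((univ : Finset V) ×ˢ D : Finset (V × W)) : Set (V × W)) := by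
    intro a b hb
    exact Finset.mem_coe.mpr (Finset.mem_product.mpr ⟨Finset.mem_univ _, hb⟩)
  obtain ⟨⟨d0, hd0⟩⟩ := hD.nonempty
  obtain ⟨v0⟩ := hG.nonempty
  rw [connected_iff]
  refine ⟨?_, ⟨⟨(v0, d0), hmem v0 d0 hd0⟩⟩⟩
  rintro ⟨⟨a, b⟩, hab⟩ ⟨⟨c, d⟩, hcd⟩
  have hbD : b ∈ D := (Finset.mem_product.mp (Finset.mem_coe.mp hab)).2
  have hdD : d ∈ D := (Finset.mem_product.mp (Finset.mem_coe.mp hcd)).2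
  let X : Set (V × W) := (((univ : Finset V) ×ˢ D : Finset (V × W)) : Set (V × W))
  let φ : (H.induce (D : Set W)) →g ((G □ H).induce X) :=
    ⟨fun x => ⟨(a, x.1), hmem a x.1 x.2⟩, by
      intro x y h
      exact SimpleGraph.boxProd_adj_right.mpr h⟩
  let ψ : G →g ((G □ H).induce X) :=
    ⟨fun v => ⟨(v, d), hmem v d hdD⟩, by
      intro x y h
      exact SimpleGraph.boxProd_adj_left.mpr h⟩
  have r1 : ((G □ H).induce X).Reachable ⟨(a, b), hab⟩ ⟨(a, d), hmem a d hdD⟩ :=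
    (hD.preconnected ⟨b, hbD⟩ ⟨d, hdD⟩).map φ
  have r2 : ((G □ H).induce X).Reachable ⟨(a, d), hmem a d hdD⟩ ⟨(c, d), hcd⟩ :=
    (hG.preconnected a c).map ψ
  exact r1.trans r2

end Product

theorem stmt2 {W : Type*} [Fintype V] [DecidableEq V] [Fintype W] [DecidableEq W]
    (G : SimpleGraph V) (H : SimpleGraph W) (hG : G.Connected) (hH : H.Connected) :
    minMemdim (V × W) (G □ H) ≤ minMemdim V G + minMemdim W H := by
  classical
  have hVne : Nonempty V := hG.nonempty
  have hWne : Nonempty W := hH.nonempty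
  have hSGne : {m | ∃ S : Finset (Finset V), IsGoodSystem G S ∧ memdim S = m}.Nonempty := by
    obtain ⟨S, hS⟩ := exists_goodSystem hG
    exact ⟨memdim S, S, hS, rfl⟩
  have hSTne : {m | ∃ S : Finset (Finset W), IsGoodSystem H S ∧ memdim S = m}.Nonempty := by
    obtain ⟨S, hS⟩ := exists_goodSystem hH
    exact ⟨memdim S, S, hS, rfl⟩
  obtain ⟨SG, hSGgood, hSGdim⟩ := Nat.sInf_mem hSGne
  obtain ⟨ST, hSTgood, hSTdim⟩ := Nat.sInf_mem hSTne
  have hgood : IsGoodSystem (G □ H) (prodSys SG ST) := by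
    constructor
    · intro C hC
      rw [prodSys, Finset.mem_union] at hC
      rcases hC with h | h
      · obtain ⟨C', hC', rfl⟩ := Finset.mem_image.mp h
        exact left_cat_connected hH (hSGgood.1 C' hC')
      · obtain ⟨D, hD, rfl⟩ := Finset.mem_image.mp h
        exact right_cat_connected hG (hSTgood.1 D hD)
    · intro s t hst
      by_cases h1 : s.1 = t.1
      · have h2 : s.2 ≠ t.2 := fun h => hst (Prod.ext h1 h)
        obtain ⟨u, hu, hlt⟩ := hSTgood.2 s.2 t.2 h2
        refine ⟨(s.1, u), ?_, ?_⟩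
        · exact SimpleGraph.boxProd_adj.mpr (Or.inr ⟨hu, rfl⟩)
        · rw [prodSys_catDist, prodSys_catDist]
          simp only
          omega
      · obtain ⟨u, hu, hlt⟩ := hSGgood.2 s.1 t.1 h1
        refine ⟨(u, s.2), ?_, ?_⟩
        · exact SimpleGraph.boxProd_adj.mpr (Or.inl ⟨hu, rfl⟩)
        · rw [prodSys_catDist, prodSys_catDist]
          simp only
          omega
  calc minMemdim (V × W) (G □ H) ≤ memdim (prodSys SG ST) :=
        Nat.sInf_le ⟨prodSys SG ST, hgood, rfl⟩
    _ ≤ memdim SG + memdim ST := prodSys_memdim SG ST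
    _ = minMemdim V G + minMemdim W H := by
        rw [minMemdim, minMemdim, hSGdim, hSTdim]
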